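/- arXiv:2103.12980 — 3 statements merged into one kernel-verified Lean document; each statement's English description precedes it below -/
import Mathlib

section
/- Let n ≥ k ≥ 1 and let Y and Z be n×k real matrices. Then Y and Z are motion-equivalent (i.e., there exist an orthogonal k×k matrix Q with QᵀQ = Iₖ and a vector u ∈ ℝᵏ such that Z = Y·Q + 1ₙ·uᵀ) if and only if A_Z = A_Y, where A_Y = Y_norm·Y_normᵀ and Y_norm = (Iₙ − (1/n)·1ₙ·1ₙᵀ)·Y. (Paper's Theorem 2.1 (b) and (c): motion-group equivalent images map to the same ellipsoid, and two images mapping to the same ellipsoid are motion equivalent.) -/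
open Matrix
/-- The `n × n` centering matrix `Iₙ − (1/n)·1ₙ·1ₙᵀ`. -/
noncomputable def centerMat (n : ℕ) : Matrix (Fin n) (Fin n) ℝ :=
  1 - Matrix.of (fun _ _ => (n : ℝ)⁻¹)

/-- The centered matrix `Y_norm = (Iₙ − (1/n)·1ₙ·1ₙᵀ)·Y`. -/
noncomputable def normMat {n k : ℕ} (Y : Matrix (Fin n) (Fin k) ℝ) :
    Matrix (Fin n) (Fin k) ℝ :=
  centerMat n * Y

/-- `A_Y = Y_norm · Y_normᵀ`. -/
noncomputable def AMat {n k : ℕ} (Y : Matrix (Fin n) (Fin k) ℝ) :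
    Matrix (Fin n) (Fin n) ℝ :=
  normMat Y * (normMat Y)ᵀ

/-- The matrix `1ₙ · uᵀ` whose every row is `uᵀ`. -/
def transMat {n k : ℕ} (u : Fin k → ℝ) : Matrix (Fin n) (Fin k) ℝ :=
  Matrix.of (fun _ j => u j)

open scoped RealInnerProductSpace

lemma EuclideanSpace.inner_piLp_equiv_symm {ι : Type*} [Fintype ι] (x y : ι → ℝ) :
    ⟪(WithLp.equiv 2 (ι → ℝ)).symm x, (WithLp.equiv 2 (ι → ℝ)).symm y⟫ = star x ⬝ᵥ y := by
  rw [WithLp.equiv_symm_apply, EuclideanSpace.inner_toLp_toLp, dotProduct_comm]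

noncomputable def rowMap {n k : ℕ} (B : Matrix (Fin n) (Fin k) ℝ) :
    (Fin n → ℝ) →ₗ[ℝ] EuclideanSpace ℝ (Fin k) :=
  (WithLp.linearEquiv 2 ℝ (Fin k → ℝ)).symm.toLinearMap ∘ₗ Bᵀ.mulVecLin

lemma rowMap_apply {n k : ℕ} (B : Matrix (Fin n) (Fin k) ℝ) (x : Fin n → ℝ) :
    rowMap B x = (WithLp.equiv 2 (Fin k → ℝ)).symm (Bᵀ *ᵥ x) := rfl

lemma rowMap_inner {n k : ℕ} (B : Matrix (Fin n) (Fin k) ℝ) (x y : Fin n → ℝ) :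
    ⟪rowMap B x, rowMap B y⟫ = x ⬝ᵥ ((B * Bᵀ) *ᵥ y) := by
  rw [rowMap_apply, rowMap_apply, EuclideanSpace.inner_piLp_equiv_symm, star_trivial]
  rw [Matrix.mulVec_transpose B x, ← Matrix.dotProduct_mulVec, Matrix.mulVec_mulVec]

lemma exists_orth {n k : ℕ} (B C : Matrix (Fin n) (Fin k) ℝ)
    (h : B * Bᵀ = C * Cᵀ) :
    ∃ Q : Matrix (Fin k) (Fin k) ℝ, Qᵀ * Q = 1 ∧ B = C * Q := by
  set LB := rowMap B with hLB
  set LC := rowMap C with hLC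
  have hinner : ∀ x y, ⟪LC x, LC y⟫ = ⟪LB x, LB y⟫ := by
    intro x y; rw [hLB, hLC, rowMap_inner, rowMap_inner, h]
  have hnorm : ∀ x, ‖LC x‖ = ‖LB x‖ := by
    intro x
    have h1 := hinner x x
    rw [real_inner_self_eq_norm_sq, real_inner_self_eq_norm_sq] at h1
    exact (sq_eq_sq₀ (norm_nonneg _) (norm_nonneg _)).mp h1
  have hle : LinearMap.ker LC ≤ LinearMap.ker LB := by
    intro x hx
    rw [LinearMap.mem_ker] at hx ⊢
    have := hnorm x
    rw [hx, norm_zero] at this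
    exact norm_eq_zero.mp this.symm
  set ψ : ↥(LinearMap.range LC) →ₗ[ℝ] EuclideanSpace ℝ (Fin k) :=
    ((LinearMap.ker LC).liftQ LB hle) ∘ₗ LC.quotKerEquivRange.symm.toLinearMap with hψdef
  have hψ : ∀ x : Fin n → ℝ, ψ ⟨LC x, LinearMap.mem_range_self _ x⟩ = LB x := by
    intro x
    rw [hψdef]
    simp only [LinearMap.coe_comp, Function.comp_apply, LinearEquiv.coe_coe]
    rw [LinearMap.quotKerEquivRange_symm_apply_image, Submodule.mkQ_apply,
      Submodule.liftQ_apply]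
  have hψnorm : ∀ v : ↥(LinearMap.range LC), ‖ψ v‖ = ‖v‖ := by
    rintro ⟨v, hv⟩
    obtain ⟨x, rfl⟩ := hv
    rw [hψ x]
    exact (hnorm x).symm
  set ψi : ↥(LinearMap.range LC) →ₗᵢ[ℝ] EuclideanSpace ℝ (Fin k) := ⟨ψ, hψnorm⟩ with hψi
  set φ := ψi.extend with hφdef
  have hφ : ∀ x : Fin n → ℝ, φ (LC x) = LB x := by
    intro x
    have := ψi.extend_apply ⟨LC x, LinearMap.mem_range_self _ x⟩
    rw [← hφdef] at this
    rw [this]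
    exact hψ x
  set plainφ : (Fin k → ℝ) →ₗ[ℝ] (Fin k → ℝ) :=
    (WithLp.linearEquiv 2 ℝ (Fin k → ℝ)).toLinearMap ∘ₗ φ.toLinearMap ∘ₗ
      (WithLp.linearEquiv 2 ℝ (Fin k → ℝ)).symm.toLinearMap with hplain
  set M := LinearMap.toMatrix' plainφ with hMdef
  have hMv : ∀ v : Fin k → ℝ, M *ᵥ v = plainφ v := by
    intro v
    rw [hMdef, ← Matrix.toLin'_apply, Matrix.toLin'_toMatrix']
  have hfun : ∀ x : Fin n → ℝ, Bᵀ *ᵥ x = (M * Cᵀ) *ᵥ x := by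
    intro x
    rw [← Matrix.mulVec_mulVec, hMv]
    have := hφ x
    rw [rowMap_apply, rowMap_apply] at this
    calc Bᵀ *ᵥ x
        = (WithLp.linearEquiv 2 ℝ (Fin k → ℝ))
            ((WithLp.equiv 2 (Fin k → ℝ)).symm (Bᵀ *ᵥ x)) := rfl
      _ = (WithLp.linearEquiv 2 ℝ (Fin k → ℝ))
            (φ ((WithLp.equiv 2 (Fin k → ℝ)).symm (Cᵀ *ᵥ x))) := by rw [this]
      _ = plainφ (Cᵀ *ᵥ x) := rfl
  have hBt : Bᵀ = M * Cᵀ := by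
    ext i j
    have h1 := congrFun (hfun (Pi.single j 1)) i
    simpa [Matrix.mulVec_single] using h1
  have hMtM : Mᵀ * M = 1 := by
    ext i j
    have h2 : ⟪φ ((WithLp.equiv 2 (Fin k → ℝ)).symm (Pi.single i 1)),
        φ ((WithLp.equiv 2 (Fin k → ℝ)).symm (Pi.single j 1))⟫
        = ⟪((WithLp.equiv 2 (Fin k → ℝ)).symm (Pi.single i 1) : EuclideanSpace ℝ (Fin k)),
           (WithLp.equiv 2 (Fin k → ℝ)).symm (Pi.single j 1)⟫ :=
      φ.inner_map_map _ _
    have hrw : ∀ l : Fin k, φ ((WithLp.equiv 2 (Fin k → ℝ)).symm (Pi.single l 1))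
        = (WithLp.equiv 2 (Fin k → ℝ)).symm (M *ᵥ Pi.single l 1) := by
      intro l
      rw [hMv]
      rfl
    rw [hrw i, hrw j, EuclideanSpace.inner_piLp_equiv_symm, star_trivial,
      EuclideanSpace.inner_piLp_equiv_symm, star_trivial] at h2
    have h3 : (Mᵀ * M) i j = (M *ᵥ Pi.single i 1) ⬝ᵥ (M *ᵥ Pi.single j 1) := by
      simp [Matrix.mul_apply, dotProduct, Matrix.mulVec_single, mul_comm]
    rw [h3, h2]
    simp [dotProduct, Pi.single_apply, Matrix.one_apply, eq_comm]
  refine ⟨Mᵀ, ?_, ?_⟩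
  · rw [Matrix.transpose_transpose]
    exact mul_eq_one_comm.mp hMtM
  · calc B = Bᵀᵀ := (Matrix.transpose_transpose B).symm
      _ = (M * Cᵀ)ᵀ := by rw [hBt]
      _ = C * Mᵀ := by rw [Matrix.transpose_mul, Matrix.transpose_transpose]

theorem stmt0 (n k : ℕ) (hk : 1 ≤ k) (hnk : k ≤ n)
    (Y Z : Matrix (Fin n) (Fin k) ℝ) :
    (∃ Q : Matrix (Fin k) (Fin k) ℝ, ∃ u : Fin k → ℝ,
      Qᵀ * Q = 1 ∧ Z = Y * Q + transMat u) ↔ AMat Z = AMat Y := by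
  have hn : 0 < n := lt_of_lt_of_le hk hnk
  have hnR : (n : ℝ) ≠ 0 := Nat.cast_ne_zero.mpr hn.ne'
  have hcT : ∀ u : Fin k → ℝ, centerMat n * (transMat u : Matrix (Fin n) (Fin k) ℝ) = 0 := by
    intro u
    ext i j
    simp only [centerMat, transMat, Matrix.sub_mul, Matrix.sub_apply, Matrix.one_mul,
      Matrix.mul_apply, Matrix.of_apply, Matrix.zero_apply]
    simp only [sub_mul, Finset.sum_sub_distrib, Matrix.one_apply, ite_mul, one_mul, zero_mul,
      Finset.sum_ite_eq, Finset.mem_univ, if_true, Finset.sum_const, Finset.card_univ,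
      Fintype.card_fin, nsmul_eq_mul]
    field_simp
    ring
  constructor
  · rintro ⟨Q, u, hQ, rfl⟩
    have hnorm : normMat (Y * Q + transMat u) = normMat Y * Q := by
      rw [normMat, Matrix.mul_add, hcT, add_zero, normMat, ← Matrix.mul_assoc]
    rw [AMat, hnorm, Matrix.transpose_mul, Matrix.mul_assoc, ← Matrix.mul_assoc Q,
      mul_eq_one_comm.mp hQ, Matrix.one_mul, AMat]
  · intro h
    obtain ⟨Q, hQ, hBC⟩ := exists_orth (normMat Z) (normMat Y) h
    set W := Z - Y * Q with hWdef
    have hW : centerMat n * W = 0 := by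
      rw [hWdef, Matrix.mul_sub, ← Matrix.mul_assoc]
      rw [normMat, normMat] at hBC
      rw [← hBC]
      exact sub_self _
    have hWconst : ∀ i j, W i j = (n : ℝ)⁻¹ * ∑ l, W l j := by
      intro i j
      have h1 := congrFun (congrFun hW i) j
      simp only [centerMat, Matrix.sub_mul, Matrix.sub_apply, Matrix.one_mul,
        Matrix.mul_apply, Matrix.of_apply, Matrix.zero_apply] at h1
      simp only [sub_mul, Finset.sum_sub_distrib, Matrix.one_apply, ite_mul, one_mul, zero_mul,
        Finset.sum_ite_eq, Finset.mem_univ, if_true, ← Finset.mul_sum] at h1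
      linarith
    refine ⟨Q, fun j => W ⟨0, hn⟩ j, hQ, ?_⟩
    ext i j
    have : W i j = W ⟨0, hn⟩ j := by rw [hWconst i j, hWconst ⟨0, hn⟩ j]
    simp only [Matrix.add_apply, transMat, Matrix.of_apply]
    have h2 : W i j = Z i j - (Y * Q) i j := rfl
    rw [← this, h2]
    ring
end

section
/- Let n, k ≥ 1 be arbitrary (no relation between n and k assumed) and let Y and Z be n×k real matrices. Then there exist a k×k real matrix Q with QᵀQ = Iₖ and u ∈ ℝᵏ such that Z = Y·Q + 1ₙ·uᵀ if and only if A_Z = A_Y, where A_Y = Y_norm·Y_normᵀ and Y_norm = (Iₙ − (1/n)·1ₙ·1ₙᵀ)·Y. (Paper's Theorem 2.2: the version of the motion-group characterization valid without the assumption n ≥ k, with s = min(n,k).) -/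
open Matrix

lemma exists_isometry_comp {n k : ℕ} (f g : (Fin n → ℝ) →ₗ[ℝ] EuclideanSpace ℝ (Fin k))
    (hfg : ∀ c, ‖g c‖ = ‖f c‖) :
    ∃ M : EuclideanSpace ℝ (Fin k) →ₗᵢ[ℝ] EuclideanSpace ℝ (Fin k), ∀ c, M (f c) = g c := by
  have hker : LinearMap.ker f ≤ LinearMap.ker g := by
    intro c hc
    simp only [LinearMap.mem_ker] at *
    have h1 := hfg c
    rw [hc, norm_zero] at h1
    exact norm_eq_zero.mp h1
  let h : ↥(LinearMap.range f) →ₗ[ℝ] EuclideanSpace ℝ (Fin k) :=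
    ((LinearMap.ker f).liftQ g hker) ∘ₗ (LinearMap.quotKerEquivRange f).symm.toLinearMap
  have hh : ∀ c, h ⟨f c, LinearMap.mem_range_self f c⟩ = g c := by
    intro c
    have h1 : (LinearMap.quotKerEquivRange f).symm ⟨f c, LinearMap.mem_range_self f c⟩ =
        Submodule.Quotient.mk c := by
      exact LinearMap.quotKerEquivRange_symm_apply_image f c _
    simp only [h, LinearMap.comp_apply, LinearEquiv.coe_toLinearMap, h1]
    exact Submodule.liftQ_apply _ g c
  have hnorm : ∀ s : ↥(LinearMap.range f), ‖h s‖ = ‖s‖ := by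
    rintro ⟨s, c, rfl⟩
    rw [show (⟨f c, ⟨c, rfl⟩⟩ : ↥(LinearMap.range f)) = ⟨f c, LinearMap.mem_range_self f c⟩ from rfl,
      hh]
    exact hfg c
  let L : ↥(LinearMap.range f) →ₗᵢ[ℝ] EuclideanSpace ℝ (Fin k) := ⟨h, hnorm⟩
  refine ⟨L.extend, fun c => ?_⟩
  have := L.extend_apply ⟨f c, LinearMap.mem_range_self f c⟩
  simpa [L, hh c] using this


lemma euclid_sum_apply {k : ℕ} {ι : Type*} (s : Finset ι) (v : ι → EuclideanSpace ℝ (Fin k))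
    (j : Fin k) : (∑ l ∈ s, v l) j = ∑ l ∈ s, v l j := by
  have h := map_sum ((EuclideanSpace.equiv (Fin k) ℝ).toLinearEquiv.toLinearMap) v s
  have h2 : ∀ x : EuclideanSpace ℝ (Fin k),
      (EuclideanSpace.equiv (Fin k) ℝ).toLinearEquiv.toLinearMap x = (x : Fin k → ℝ) :=
    fun _ => rfl
  calc (∑ l ∈ s, v l) j
      = ((EuclideanSpace.equiv (Fin k) ℝ).toLinearEquiv.toLinearMap (∑ l ∈ s, v l)) j := rfl
    _ = (∑ l ∈ s, (EuclideanSpace.equiv (Fin k) ℝ).toLinearEquiv.toLinearMap (v l)) j := by rw [h]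
    _ = ∑ l ∈ s, v l j := by rw [Finset.sum_apply]; rfl

lemma exists_orth_of_gram_eq {n k : ℕ} (A B : Matrix (Fin n) (Fin k) ℝ)
    (h : A * Aᵀ = B * Bᵀ) :
    ∃ Q : Matrix (Fin k) (Fin k) ℝ, Qᵀ * Q = 1 ∧ A = B * Q := by
  classical
  let e := (EuclideanSpace.equiv (Fin k) ℝ).symm.toLinearEquiv.toLinearMap
  let f : (Fin n → ℝ) →ₗ[ℝ] EuclideanSpace ℝ (Fin k) := e ∘ₗ B.vecMulLinear
  let g : (Fin n → ℝ) →ₗ[ℝ] EuclideanSpace ℝ (Fin k) := e ∘ₗ A.vecMulLinear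
  have hfapp : ∀ c j, f c j = (c ᵥ* B) j := fun c j => rfl
  have hgapp : ∀ c j, g c j = (c ᵥ* A) j := fun c j => rfl
  have hinner : ∀ (M : Matrix (Fin n) (Fin k) ℝ) (c : Fin n → ℝ),
      (inner ℝ ((e ∘ₗ M.vecMulLinear) c) ((e ∘ₗ M.vecMulLinear) c) : ℝ) = dotProduct c (Matrix.mulVec (M * Mᵀ) c) := by
    intro M c
    have heq : (inner ℝ ((e ∘ₗ M.vecMulLinear) c) ((e ∘ₗ M.vecMulLinear) c) : ℝ)
        = (c ᵥ* M) ⬝ᵥ (c ᵥ* M) := by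
      rw [PiLp.inner_apply]
      simp only [RCLike.inner_apply, conj_trivial]
      rfl
    rw [heq, ← Matrix.mulVec_mulVec, Matrix.dotProduct_mulVec, Matrix.mulVec_transpose]
  have hfg : ∀ c, ‖g c‖ = ‖f c‖ := by
    intro c
    rw [norm_eq_sqrt_real_inner, norm_eq_sqrt_real_inner]
    congr 1
    show (inner ℝ ((e ∘ₗ A.vecMulLinear) c) ((e ∘ₗ A.vecMulLinear) c) : ℝ) =
      (inner ℝ ((e ∘ₗ B.vecMulLinear) c) ((e ∘ₗ B.vecMulLinear) c) : ℝ)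
    rw [hinner, hinner, h]
  obtain ⟨M, hM⟩ := exists_isometry_comp f g hfg
  refine ⟨Matrix.of (fun l j => M (EuclideanSpace.single l 1) j), ?_, ?_⟩
  · rw [← mul_eq_one_comm]
    ext l m
    have : (inner ℝ (M (EuclideanSpace.single l 1)) (M (EuclideanSpace.single m 1)) : ℝ)
        = (inner ℝ (EuclideanSpace.single l (1:ℝ) : EuclideanSpace ℝ (Fin k))
            (EuclideanSpace.single m (1:ℝ)) : ℝ) := M.inner_map_map _ _
    rw [PiLp.inner_apply] at this
    simp only [RCLike.inner_apply, conj_trivial] at this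
    rw [EuclideanSpace.inner_single_left] at this
    simp only [conj_trivial, one_mul, EuclideanSpace.single_apply] at this
    simp only [Matrix.mul_apply, Matrix.transpose_apply, Matrix.of_apply, Matrix.one_apply]
    rw [← this]
    exact Finset.sum_congr rfl fun _ _ => mul_comm _ _
  · ext i j
    have h1 : M (f (Pi.single i 1)) = g (Pi.single i 1) := hM _
    have h2 : f (Pi.single i 1) = ∑ l, B i l • (EuclideanSpace.single l (1:ℝ)) := by
      ext j
      rw [hfapp, Matrix.single_one_vecMul, euclid_sum_apply]
      simp [EuclideanSpace.single_apply, PiLp.smul_apply]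
    have h3 : A i j = M (f (Pi.single i 1)) j := by
      rw [h1, hgapp, Matrix.single_one_vecMul]
      rfl
    rw [h3, h2, map_sum, euclid_sum_apply]
    simp [Matrix.mul_apply, _root_.map_smul, PiLp.smul_apply]


lemma centerMat_mul_transMat {n k : ℕ} (hn : 1 ≤ n) (u : Fin k → ℝ) :
    centerMat n * (transMat u : Matrix (Fin n) (Fin k) ℝ) = 0 := by
  have hne : (n:ℝ) ≠ 0 := Nat.cast_ne_zero.mpr (Nat.one_le_iff_ne_zero.mp hn)
  ext i j
  simp only [centerMat, Matrix.mul_apply, Matrix.sub_apply, Matrix.one_apply, Matrix.of_apply,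
    transMat, sub_mul, Finset.sum_sub_distrib, ite_mul, one_mul, zero_mul,
    Finset.sum_ite_eq, Finset.mem_univ, if_true, Finset.sum_const, Finset.card_univ,
    Fintype.card_fin, nsmul_eq_mul, Matrix.zero_apply]
  field_simp
  ring

lemma normMat_add_mean {n k : ℕ} (Y : Matrix (Fin n) (Fin k) ℝ) :
    Y = normMat Y + transMat (fun j => (n:ℝ)⁻¹ * ∑ i, Y i j) := by
  ext i j
  simp only [normMat, centerMat, Matrix.mul_apply, Matrix.sub_apply, Matrix.one_apply,
    Matrix.of_apply, transMat, Matrix.add_apply, sub_mul, Finset.sum_sub_distrib, ite_mul,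
    one_mul, zero_mul, Finset.sum_ite_eq, Finset.mem_univ, if_true, Finset.mul_sum]
  ring

lemma transMat_mul {n k : ℕ} (v : Fin k → ℝ) (Q : Matrix (Fin k) (Fin k) ℝ) :
    (transMat v : Matrix (Fin n) (Fin k) ℝ) * Q = transMat (v ᵥ* Q) := by
  ext i j
  simp [transMat, Matrix.mul_apply, Matrix.vecMul, dotProduct]

theorem stmt1 (n k : ℕ) (hn : 1 ≤ n) (hk : 1 ≤ k)
    (Y Z : Matrix (Fin n) (Fin k) ℝ) :
    (∃ Q : Matrix (Fin k) (Fin k) ℝ, ∃ u : Fin k → ℝ,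
      Qᵀ * Q = 1 ∧ Z = Y * Q + transMat u) ↔ AMat Z = AMat Y := by
  constructor
  · rintro ⟨Q, u, hQ, rfl⟩
    have hQQ : Q * Qᵀ = 1 := mul_eq_one_comm.mp hQ
    have hN : normMat (Y * Q + transMat u) = normMat Y * Q := by
      rw [normMat, Matrix.mul_add, centerMat_mul_transMat hn, add_zero, ← Matrix.mul_assoc]
      rfl
    rw [AMat, AMat, hN, Matrix.transpose_mul, Matrix.mul_assoc,
      ← Matrix.mul_assoc Q, hQQ, Matrix.one_mul]
  · intro hA
    obtain ⟨Q, hQ, hZQ⟩ := exists_orth_of_gram_eq (normMat Z) (normMat Y)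
      (by simpa [AMat] using hA)
    set mY : Fin k → ℝ := fun j => (n:ℝ)⁻¹ * ∑ i, Y i j with hmY
    set mZ : Fin k → ℝ := fun j => (n:ℝ)⁻¹ * ∑ i, Z i j with hmZ
    refine ⟨Q, mZ - mY ᵥ* Q, hQ, ?_⟩
    have hY : normMat Y = Y - transMat mY := by
      rw [eq_sub_iff_add_eq]
      exact (normMat_add_mean Y).symm
    calc Z = normMat Z + transMat mZ := normMat_add_mean Z
      _ = normMat Y * Q + transMat mZ := by rw [hZQ]
      _ = Y * Q + transMat (mZ - mY ᵥ* Q) := by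
          rw [hY, Matrix.sub_mul, transMat_mul]
          ext i j
          simp only [Matrix.add_apply, Matrix.sub_apply, transMat, Matrix.of_apply,
            Pi.sub_apply]
          ring
end

section
/- Let Y and Z be n×k real matrices with Y_norm ≠ 0 and Z_norm ≠ 0, and let λmax(A) denote the largest eigenvalue of a real symmetric matrix A. Then λmax(A_Y) > 0 and λmax(A_Z) > 0, and Y and Z are similarity-equivalent if and only if (1/λmax(A_Y))·A_Y = (1/λmax(A_Z))·A_Z. (Paper's Theorem 2.3(b)(i),(c): normalizing so the longest principal axis has length 1 gives a complete invariant for similarity equivalence.) -/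
open Matrix Pointwise

/-- The largest eigenvalue of a real (symmetric) matrix, as the supremum of its spectrum. -/
noncomputable def lamMax {n : ℕ} (A : Matrix (Fin n) (Fin n) ℝ) : ℝ :=
  sSup (spectrum ℝ A)

section Aux

variable {n k : ℕ}

lemma spec_eq {A : Matrix (Fin n) (Fin n) ℝ} (hA : A.IsHermitian) :
    spectrum ℝ A = Set.range hA.eigenvalues := by
  conv_lhs => rw [hA.spectral_theorem]
  rw [Unitary.conjStarAlgAut_apply, Unitary.spectrum_star_right_conjugate, spectrum_diagonal]
  simp [Function.comp]

lemma trace_eq {A : Matrix (Fin n) (Fin n) ℝ} (hA : A.IsHermitian) :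
    A.trace = ∑ i, hA.eigenvalues i := by
  conv_lhs => rw [hA.spectral_theorem]
  rw [Unitary.conjStarAlgAut_apply, Matrix.trace_mul_cycle]
  have h1 : (star (Matrix.IsHermitian.eigenvectorUnitary hA) : Matrix (Fin n) (Fin n) ℝ)
      * (Matrix.IsHermitian.eigenvectorUnitary hA : Matrix (Fin n) (Fin n) ℝ) = 1 := by
    exact_mod_cast (Unitary.star_mul_self_of_mem (hA.eigenvectorUnitary).2)
  rw [h1, Matrix.one_mul, Matrix.trace_diagonal]
  simp

lemma herm_AAT (N : Matrix (Fin n) (Fin k) ℝ) : (N * Nᵀ).IsHermitian := by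
  rw [show Nᵀ = Nᴴ from by ext i j; simp [conjTranspose_apply]]
  exact isHermitian_mul_conjTranspose_self N

lemma lamMax_greatest (hn : 0 < n) {A : Matrix (Fin n) (Fin n) ℝ}
    (hA : A.IsHermitian) : IsGreatest (spectrum ℝ A) (lamMax A) := by
  haveI : Nonempty (Fin n) := ⟨⟨0, hn⟩⟩
  rw [lamMax, spec_eq hA]
  have hfin : (Set.range hA.eigenvalues).Finite := Set.finite_range _
  have hne : (Set.range hA.eigenvalues).Nonempty := Set.range_nonempty _
  exact ⟨hne.csSup_mem hfin, fun x hx => le_csSup hfin.bddAbove hx⟩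

lemma lamMax_pos (hn : 0 < n) {N : Matrix (Fin n) (Fin k) ℝ} (hN : N ≠ 0) :
    0 < lamMax (N * Nᵀ) := by
  have hA := herm_AAT N
  have htr : 0 < (N * Nᵀ).trace := by
    have : (N * Nᵀ).trace = ∑ i, ∑ j, N i j ^ 2 := by
      simp [Matrix.trace, Matrix.mul_apply, Matrix.diag, sq]
    rw [this]
    obtain ⟨i, j, hij⟩ : ∃ i j, N i j ≠ 0 := by
      by_contra h; push_neg at h; exact hN (by ext i j; simpa using h i j)
    have h1 : 0 < ∑ j, N i j ^ 2 :=
      Finset.sum_pos' (fun _ _ => sq_nonneg _) ⟨j, Finset.mem_univ _, by positivity⟩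
    refine Finset.sum_pos' (fun m _ => Finset.sum_nonneg fun l _ => sq_nonneg _)
      ⟨i, Finset.mem_univ _, h1⟩
  have hex : ∃ i, 0 < hA.eigenvalues i := by
    by_contra h; push_neg at h
    have : (N * Nᵀ).trace ≤ 0 := by
      rw [trace_eq hA]; exact Finset.sum_nonpos fun i _ => h i
    linarith
  obtain ⟨i, hi⟩ := hex
  calc 0 < hA.eigenvalues i := hi
    _ ≤ lamMax (N * Nᵀ) := (lamMax_greatest hn hA).2 (by rw [spec_eq hA]; exact ⟨i, rfl⟩)

lemma lamMax_smul (hn : 0 < n) {A : Matrix (Fin n) (Fin n) ℝ}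
    (hA : A.IsHermitian) {c : ℝ} (hc : 0 < c) : lamMax (c • A) = c * lamMax A := by
  have hg := lamMax_greatest hn hA
  have hsp : spectrum ℝ (c • A) = c • spectrum ℝ A := by
    simpa [Units.smul_def] using spectrum.unit_smul_eq_smul A (Units.mk0 c hc.ne')
  have hg2 : IsGreatest (c • spectrum ℝ A) (c * lamMax A) := by
    constructor
    · exact ⟨lamMax A, hg.1, rfl⟩
    · rintro x ⟨y, hy, rfl⟩
      exact mul_le_mul_of_nonneg_left (hg.2 hy) hc.le
  rw [lamMax, hsp, hg2.csSup_eq]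

noncomputable def eqv (k : ℕ) : (Fin k → ℝ) ≃ₗ[ℝ] EuclideanSpace ℝ (Fin k) :=
  (WithLp.linearEquiv 2 ℝ (Fin k → ℝ)).symm

lemma einner (v w : Fin k → ℝ) : (inner ℝ (eqv k v) (eqv k w) : ℝ) = v ⬝ᵥ w := by
  simp [eqv, PiLp.inner_apply, RCLike.inner_apply, dotProduct, WithLp.linearEquiv, mul_comm]

lemma gram_key {M N : Matrix (Fin n) (Fin k) ℝ} (h : M * Mᵀ = N * Nᵀ) :
    ∃ Q : Matrix (Fin k) (Fin k) ℝ, Qᵀ * Q = 1 ∧ N = M * Q := by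
  set E := EuclideanSpace ℝ (Fin k) with hE
  set e := eqv k with he
  set f : (Fin n → ℝ) →ₗ[ℝ] E := e.toLinearMap ∘ₗ Mᵀ.mulVecLin with hf
  set g : (Fin n → ℝ) →ₗ[ℝ] E := e.toLinearMap ∘ₗ Nᵀ.mulVecLin with hg
  have hinnf : ∀ x y, (inner ℝ (f x) (f y) : ℝ) = ((M * Mᵀ) *ᵥ x) ⬝ᵥ y := by
    intro x y
    show (inner ℝ (e (Mᵀ *ᵥ x)) (e (Mᵀ *ᵥ y)) : ℝ) = _
    rw [einner, Matrix.dotProduct_mulVec, Matrix.vecMul_transpose, Matrix.mulVec_mulVec]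
  have hinng : ∀ x y, (inner ℝ (g x) (g y) : ℝ) = ((N * Nᵀ) *ᵥ x) ⬝ᵥ y := by
    intro x y
    show (inner ℝ (e (Nᵀ *ᵥ x)) (e (Nᵀ *ᵥ y)) : ℝ) = _
    rw [einner, Matrix.dotProduct_mulVec, Matrix.vecMul_transpose, Matrix.mulVec_mulVec]
  have hfg : ∀ x y, (inner ℝ (g x) (g y) : ℝ) = inner ℝ (f x) (f y) := by
    intro x y; rw [hinnf, hinng, h]
  have hker : ∀ x, f x = 0 → g x = 0 := by
    intro x hx
    have : (inner ℝ (g x) (g x) : ℝ) = 0 := by rw [hfg, hx, inner_zero_right]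
    exact inner_self_eq_zero.mp this
  set S := LinearMap.range f with hS
  obtain ⟨σ, hσ⟩ := f.rangeRestrict.exists_rightInverse_of_surjective
    (LinearMap.range_rangeRestrict f)
  have hfσ : ∀ s : S, f (σ s) = (s : E) := by
    intro s
    have := LinearMap.congr_fun hσ s
    exact congrArg Subtype.val this
  set T : S →ₗ[ℝ] E := g ∘ₗ σ with hT
  have hTinner : ∀ s t : S, (inner ℝ (T s) (T t) : ℝ) = inner ℝ s t := by
    intro s t
    rw [Submodule.coe_inner]
    show (inner ℝ (g (σ s)) (g (σ t)) : ℝ) = _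
    rw [hfg, hfσ, hfσ]
  set L : S →ₗᵢ[ℝ] E := T.isometryOfInner hTinner with hL
  set Φ : E →ₗᵢ[ℝ] E := L.extend with hΦdef
  have hΦf : ∀ x, Φ (f x) = g x := by
    intro x
    have hmem : f x ∈ S := ⟨x, rfl⟩
    have h1 : Φ (f x) = L ⟨f x, hmem⟩ := L.extend_apply ⟨f x, hmem⟩
    have h2 : L ⟨f x, hmem⟩ = g (σ ⟨f x, hmem⟩) := rfl
    have h3 : f (σ ⟨f x, hmem⟩ - x) = 0 := by
      rw [map_sub, hfσ, sub_self]
    have h4 : g (σ ⟨f x, hmem⟩ - x) = 0 := hker _ h3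
    rw [map_sub, sub_eq_zero] at h4
    rw [h1, h2, h4]
  set Q' : Matrix (Fin k) (Fin k) ℝ :=
    LinearMap.toMatrix' (e.symm.toLinearMap ∘ₗ Φ.toLinearMap ∘ₗ e.toLinearMap) with hQ'def
  have hQ'v : ∀ v : Fin k → ℝ, Q' *ᵥ v = e.symm (Φ (e v)) := by
    intro v
    rw [← Matrix.toLin'_apply, hQ'def, Matrix.toLin'_toMatrix']
    rfl
  have hQM : Q' * Mᵀ = Nᵀ := by
    have hv : ∀ x, (Q' * Mᵀ) *ᵥ x = Nᵀ *ᵥ x := by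
      intro x
      rw [← Matrix.mulVec_mulVec, hQ'v]
      have : e (Mᵀ *ᵥ x) = f x := rfl
      rw [this, hΦf]
      show e.symm (e (Nᵀ *ᵥ x)) = _
      simp
    have : Matrix.toLin' (Q' * Mᵀ) = Matrix.toLin' Nᵀ :=
      LinearMap.ext fun x => by simpa [Matrix.toLin'_apply] using hv x
    exact Matrix.toLin'.injective this
  have horth : Q'ᵀ * Q' = 1 := by
    ext i j
    have hcol : ∀ i, (fun l => Q' l i) = Q' *ᵥ Pi.single i 1 := by
      intro i; funext l; simp [Matrix.mulVec, dotProduct, Pi.single_apply]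
    have key : (fun l => Q' l i) ⬝ᵥ (fun l => Q' l j) = Pi.single i 1 ⬝ᵥ Pi.single j (1:ℝ) := by
      have h1 : ∀ v, (eqv k) (Q' *ᵥ v) = Φ ((eqv k) v) := by
        intro v; rw [hQ'v]; simp [he]
      rw [hcol, hcol, ← einner, h1, h1, Φ.inner_map_map, einner]
    have lhs_eq : (Q'ᵀ * Q') i j = (fun l => Q' l i) ⬝ᵥ (fun l => Q' l j) := by
      simp [Matrix.mul_apply, dotProduct, Matrix.transpose_apply]
    rw [lhs_eq, key]
    simp [Matrix.one_apply, Pi.single_apply, dotProduct, Finset.sum_ite_eq, eq_comm]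
  refine ⟨Q'ᵀ, ?_, ?_⟩
  · rw [Matrix.transpose_transpose]
    exact mul_eq_one_comm.mp horth
  · have := congrArg Matrix.transpose hQM
    rw [Matrix.transpose_mul, Matrix.transpose_transpose] at this
    exact this.symm

lemma normMat_apply (X : Matrix (Fin n) (Fin k) ℝ) (i : Fin n) (j : Fin k) :
    normMat X i j = X i j - (n : ℝ)⁻¹ * ∑ m, X m j := by
  simp [normMat, centerMat, Matrix.mul_apply, Matrix.sub_apply, sub_mul,
    Finset.sum_sub_distrib, Matrix.one_apply, ite_mul, Finset.mul_sum]

lemma decompX (X : Matrix (Fin n) (Fin k) ℝ) :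
    X = normMat X + transMat (fun j => (n : ℝ)⁻¹ * ∑ m, X m j) := by
  ext i j
  simp [normMat_apply, transMat]

lemma normMat_trans (u : Fin k → ℝ) : normMat (transMat u : Matrix (Fin n) (Fin k) ℝ) = 0 := by
  ext i j
  have hn : (n : ℝ) ≠ 0 := Nat.cast_ne_zero.mpr i.pos.ne'
  simp [normMat_apply, transMat]
  field_simp
  simp

lemma normMat_add (X W : Matrix (Fin n) (Fin k) ℝ) :
    normMat (X + W) = normMat X + normMat W := by
  simp [normMat, Matrix.mul_add]

lemma normMat_smul (c : ℝ) (X : Matrix (Fin n) (Fin k) ℝ) :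
    normMat (c • X) = c • normMat X := by
  simp [normMat, Matrix.mul_smul]

lemma normMat_mulQ (X : Matrix (Fin n) (Fin k) ℝ) (Q : Matrix (Fin k) (Fin k) ℝ) :
    normMat (X * Q) = normMat X * Q := by
  simp [normMat, Matrix.mul_assoc]

lemma transMat_sub (u v : Fin k → ℝ) :
    (transMat (u - v) : Matrix (Fin n) (Fin k) ℝ) = transMat u - transMat v := by
  ext i j; simp [transMat]

end Aux

theorem stmt9 (n k : ℕ) (Y Z : Matrix (Fin n) (Fin k) ℝ)
    (hY : normMat Y ≠ 0) (hZ : normMat Z ≠ 0) :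
    0 < lamMax (AMat Y) ∧ 0 < lamMax (AMat Z) ∧
    ((∃ a : ℝ, 0 < a ∧ ∃ Q : Matrix (Fin k) (Fin k) ℝ, ∃ u : Fin k → ℝ,
        Qᵀ * Q = 1 ∧ Z = a • (Y * Q) + transMat u) ↔
      (lamMax (AMat Y))⁻¹ • AMat Y = (lamMax (AMat Z))⁻¹ • AMat Z) := by
  have hn : 0 < n := by
    rcases Nat.eq_zero_or_pos n with h0 | h
    · subst h0; exact absurd (by ext i j; exact i.elim0) hY
    · exact h
  have hAYdef : AMat Y = normMat Y * (normMat Y)ᵀ := rfl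
  have hAZdef : AMat Z = normMat Z * (normMat Z)ᵀ := rfl
  have hAY : (AMat Y).IsHermitian := herm_AAT (normMat Y)
  have hlY : 0 < lamMax (AMat Y) := hAYdef ▸ lamMax_pos hn hY
  have hlZ : 0 < lamMax (AMat Z) := hAZdef ▸ lamMax_pos hn hZ
  refine ⟨hlY, hlZ, ?_, ?_⟩
  · -- forward
    rintro ⟨a, ha, Q, u, hQ, rfl⟩
    have hQQT : Q * Qᵀ = 1 := mul_eq_one_comm.mp hQ
    have hnorm : normMat (a • (Y * Q) + transMat u) = a • (normMat Y * Q) := by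
      rw [normMat_add, normMat_trans, add_zero, normMat_smul, normMat_mulQ]
    have hAZ2 : AMat (a • (Y * Q) + transMat u) = (a * a) • AMat Y := by
      rw [AMat, hnorm, Matrix.transpose_smul, Matrix.transpose_mul, Matrix.smul_mul,
        Matrix.mul_smul, smul_smul, hAYdef]
      congr 1
      rw [Matrix.mul_assoc, ← Matrix.mul_assoc Q Qᵀ, hQQT, Matrix.one_mul]
    have haa : 0 < a * a := mul_pos ha ha
    rw [hAZ2, lamMax_smul hn hAY haa, smul_smul]
    congr 1
    field_simp
  · -- backward
    intro heq
    set a : ℝ := Real.sqrt (lamMax (AMat Z) / lamMax (AMat Y)) with hadef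
    have ha : 0 < a := Real.sqrt_pos.mpr (div_pos hlZ hlY)
    have ha2 : a * a = lamMax (AMat Z) / lamMax (AMat Y) :=
      Real.mul_self_sqrt (div_pos hlZ hlY).le
    have hAZ : AMat Z = (a * a) • AMat Y := by
      rw [ha2, div_eq_mul_inv, ← smul_smul, heq, smul_smul,
        mul_inv_cancel₀ hlZ.ne', one_smul]
    have hgram : (a • normMat Y) * (a • normMat Y)ᵀ = normMat Z * (normMat Z)ᵀ := by
      rw [Matrix.transpose_smul, Matrix.smul_mul, Matrix.mul_smul, smul_smul,
        ← hAYdef, ← hAZdef, hAZ]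
    obtain ⟨Q, hQ, hNZ⟩ := gram_key hgram
    refine ⟨a, ha, Q, (fun j => (n : ℝ)⁻¹ * ∑ m, Z m j)
      - (fun j => (n : ℝ)⁻¹ * ∑ m, (a • (Y * Q)) m j), hQ, ?_⟩
    have h1 : normMat Z = normMat (a • (Y * Q)) := by
      rw [hNZ, Matrix.smul_mul, ← normMat_mulQ, ← normMat_smul]
    have h2 := decompX Z
    have h3 := decompX (a • (Y * Q))
    rw [transMat_sub]
    have h4 : normMat (a • (Y * Q))
        = a • (Y * Q) - transMat (fun j => (n : ℝ)⁻¹ * ∑ m, (a • (Y * Q)) m j) :=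
      eq_sub_of_add_eq h3.symm
    calc Z = normMat Z + transMat (fun j => (n : ℝ)⁻¹ * ∑ m, Z m j) := h2
      _ = normMat (a • (Y * Q)) + transMat (fun j => (n : ℝ)⁻¹ * ∑ m, Z m j) := by rw [h1]
      _ = (a • (Y * Q) - transMat (fun j => (n : ℝ)⁻¹ * ∑ m, (a • (Y * Q)) m j))
          + transMat (fun j => (n : ℝ)⁻¹ * ∑ m, Z m j) := by rw [h4]
      _ = a • (Y * Q) + (transMat (fun j => (n : ℝ)⁻¹ * ∑ m, Z m j)
          - transMat (fun j => (n : ℝ)⁻¹ * ∑ m, (a • (Y * Q)) m j)) := by abel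
end
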